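/- Let X be a two-dimensional real normed linear space, Y any real normed linear space, and x ∈ X nonzero. A bounded linear operator T : X → Y preserves Birkhoff-James orthogonality at x in some direction (i.e., there exists y ∈ x^⊥_B \ {0} with Tx ⊥_B Ty) if and only if there exist u, v ∈ x^⊥_B \ {0} such that Tu ∈ (Tx)⁺, Tv ∈ (Tx)⁻, and (1−α)u + αv ∈ x^⊥_B \ {0} for all α ∈ [0,1]. -/

import Mathlib

/-- Birkhoff-James orthogonality. -/
def BJOrth {X : Type*} [NormedAddCommGroup X] [NormedSpace ℝ X] (x y : X) : Prop :=
  ∀ t : ℝ, ‖x‖ ≤ ‖x + t • y‖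

/-- `y ∈ x⁺`. -/
def BJPlus {X : Type*} [NormedAddCommGroup X] [NormedSpace ℝ X] (x : X) : Set X :=
  {y | ∀ t : ℝ, 0 ≤ t → ‖x‖ ≤ ‖x + t • y‖}

/-- `y ∈ x⁻`. -/
def BJMinus {X : Type*} [NormedAddCommGroup X] [NormedSpace ℝ X] (x : X) : Set X :=
  {y | ∀ t : ℝ, t ≤ 0 → ‖x‖ ≤ ‖x + t • y‖}

lemma bj_dichotomy {Y : Type*} [NormedAddCommGroup Y] [NormedSpace ℝ Y] (w z : Y) :
    z ∈ BJPlus w ∨ z ∈ BJMinus w := by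
  by_contra h
  push_neg at h
  obtain ⟨h1, h2⟩ := h
  simp only [BJPlus, BJMinus, Set.mem_setOf_eq, not_forall] at h1 h2
  obtain ⟨t, ht, h1⟩ := h1
  obtain ⟨s, hs, h2⟩ := h2
  push_neg at h1 h2
  have ht' : 0 < t := by
    rcases ht.lt_or_eq with h | h
    · exact h
    · exfalso; rw [← h] at h1; simp at h1
  have hs' : s < 0 := by
    rcases hs.lt_or_eq with h | h
    · exact h
    · exfalso; rw [h] at h2; simp at h2
  have hts : 0 < t - s := by linarith
  set c : ℝ := t / (t - s) with hc
  have hc0 : 0 < c := div_pos ht' hts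
  have hc1 : c < 1 := (div_lt_one hts).2 (by linarith)
  have hcst : c * s + (1 - c) * t = 0 := by
    field_simp [hc]
    have hct : c * (t - s) = t := by rw [hc]; field_simp [hts.ne']
    linear_combination -hct
  have key : w = c • (w + s • z) + (1 - c) • (w + t • z) := by
    have h' : c • (w + s • z) + (1 - c) • (w + t • z)
        = w + (c * s + (1 - c) * t) • z := by module
    rw [h', hcst]; simp
  have hmain : ‖w‖ < ‖w‖ := by
    calc ‖w‖ = ‖c • (w + s • z) + (1 - c) • (w + t • z)‖ := by rw [← key]
      _ ≤ c * ‖w + s • z‖ + (1 - c) * ‖w + t • z‖ := by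
          refine (norm_add_le _ _).trans ?_
          rw [norm_smul, norm_smul, Real.norm_eq_abs, Real.norm_eq_abs,
            abs_of_pos hc0, abs_of_pos (by linarith : (0:ℝ) < 1 - c)]
      _ < c * ‖w‖ + (1 - c) * ‖w‖ :=
          add_lt_add (mul_lt_mul_of_pos_left h2 hc0)
            (mul_lt_mul_of_pos_left h1 (by linarith))
      _ = ‖w‖ := by ring
  exact absurd hmain (lt_irrefl _)

theorem stmt_6 {X Y : Type*} [NormedAddCommGroup X] [NormedSpace ℝ X]
    [NormedAddCommGroup Y] [NormedSpace ℝ Y]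
    (hdim : Module.finrank ℝ X = 2) (x : X) (hx : x ≠ 0) (T : X →L[ℝ] Y) :
    (∃ y ∈ ({y : X | BJOrth x y} \ {0}), BJOrth (T x) (T y)) ↔
      ∃ u ∈ ({y : X | BJOrth x y} \ {0}), ∃ v ∈ ({y : X | BJOrth x y} \ {0}),
        T u ∈ BJPlus (T x) ∧ T v ∈ BJMinus (T x) ∧
        ∀ α ∈ Set.Icc (0:ℝ) 1, (1 - α) • u + α • v ∈ ({y : X | BJOrth x y} \ {0}) := by
  constructor
  · rintro ⟨y, hy, hTy⟩
    refine ⟨y, hy, y, hy, fun t _ => hTy t, fun t _ => hTy t, fun α _ => ?_⟩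
    have h' : (1 - α) • y + α • y = y := by module
    rwa [h']
  · rintro ⟨u, hu, v, hv, hTu, hTv, hconv⟩
    set A : Set ℝ := {α | T ((1 - α) • u + α • v) ∈ BJPlus (T x)} with hA
    set B : Set ℝ := {α | T ((1 - α) • u + α • v) ∈ BJMinus (T x)} with hB
    have hAc : IsClosed A := by
      have hrw : A = ⋂ t ∈ Set.Ici (0:ℝ),
          {α : ℝ | ‖T x‖ ≤ ‖T x + t • T ((1 - α) • u + α • v)‖} := by
        ext α
        simp [hA, BJPlus]
      rw [hrw]
      refine isClosed_biInter fun t _ => isClosed_le continuous_const ?_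
      fun_prop
    have hBc : IsClosed B := by
      have hrw : B = ⋂ t ∈ Set.Iic (0:ℝ),
          {α : ℝ | ‖T x‖ ≤ ‖T x + t • T ((1 - α) • u + α • v)‖} := by
        ext α
        simp [hB, BJMinus]
      rw [hrw]
      refine isClosed_biInter fun t _ => isClosed_le continuous_const ?_
      fun_prop
    have hcover : Set.Icc (0:ℝ) 1 ⊆ A ∪ B := fun α _ => bj_dichotomy _ _
    have h0 : (0:ℝ) ∈ A := by
      simp only [hA, Set.mem_setOf_eq]
      have h' : ((1:ℝ) - 0) • u + (0:ℝ) • v = u := by module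
      rw [h']; exact hTu
    have h1 : (1:ℝ) ∈ B := by
      simp only [hB, Set.mem_setOf_eq]
      have h' : ((1:ℝ) - 1) • u + (1:ℝ) • v = v := by module
      rw [h']; exact hTv
    obtain ⟨α, hαI, hαA, hαB⟩ :=
      (isPreconnected_closed_iff.mp isPreconnected_Icc) A B hAc hBc hcover
        ⟨0, ⟨le_refl 0, zero_le_one⟩, h0⟩ ⟨1, ⟨zero_le_one, le_refl 1⟩, h1⟩
    refine ⟨(1 - α) • u + α • v, hconv α hαI, fun t => ?_⟩
    rcases le_or_gt 0 t with ht | ht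
    · exact hαA t ht
    · exact hαB t ht.le
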